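/- The risk-aware Bellman operator has a unique fixed point: with T defined by (T v)(s) = inf_{u ∈ U_s} sup_{μ ∈ M(s,u)} ( ∑_{(a,k) ∈ A×S} μ(a,k)·(c(s,a) + γ·v(k)) − b_s(μ) ), there exists a unique function v : S → ℝ such that v(s) = (T v)(s) for every s ∈ S. -/

import Mathlib

open Finset

noncomputable section

lemma simplex_sum_abs_le {ι : Type*} [Fintype ι] {μ a : ι → ℝ}
    (hμ : μ ∈ stdSimplex ℝ ι) {r : ℝ} (ha : ∀ q, |a q| ≤ r) :
    |∑ q, μ q * a q| ≤ r := by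
  calc |∑ q, μ q * a q| ≤ ∑ q, |μ q * a q| := Finset.abs_sum_le_sum_abs _ _
    _ = ∑ q, μ q * |a q| := by
        refine Finset.sum_congr rfl fun q _ => ?_
        rw [abs_mul, abs_of_nonneg (hμ.1 q)]
    _ ≤ ∑ q, μ q * r := Finset.sum_le_sum fun q _ => mul_le_mul_of_nonneg_left (ha q) (hμ.1 q)
    _ = r := by rw [← Finset.sum_mul, hμ.2, one_mul]

lemma sSup_image_le_add {α : Type*} {K : Set α} (hK : K.Nonempty)
    {g1 g2 : α → ℝ} (h2 : BddAbove (g2 '' K))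
    {r : ℝ} (h : ∀ x ∈ K, g1 x - g2 x ≤ r) :
    sSup (g1 '' K) ≤ sSup (g2 '' K) + r := by
  refine csSup_le (hK.image _) ?_
  rintro y ⟨x, hx, rfl⟩
  have h2' : g2 x ≤ sSup (g2 '' K) := le_csSup h2 ⟨x, hx, rfl⟩
  have := h x hx
  linarith

lemma abs_sSup_image_sub_le {α : Type*} {K : Set α} (hK : K.Nonempty)
    {g1 g2 : α → ℝ} (h1 : BddAbove (g1 '' K)) (h2 : BddAbove (g2 '' K))
    {r : ℝ} (h : ∀ x ∈ K, |g1 x - g2 x| ≤ r) :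
    |sSup (g1 '' K) - sSup (g2 '' K)| ≤ r := by
  rw [abs_sub_le_iff]
  constructor
  · have := sSup_image_le_add hK h2 (g1 := g1) (fun x hx => (abs_sub_le_iff.mp (h x hx)).1)
    linarith
  · have := sSup_image_le_add hK h1 (g1 := g2) (fun x hx => (abs_sub_le_iff.mp (h x hx)).2)
    linarith

lemma ciInf_le_add {ι : Type*} [Nonempty ι] {g1 g2 : ι → ℝ}
    (h1 : BddBelow (Set.range g1))
    {r : ℝ} (h : ∀ u, g1 u - g2 u ≤ r) :
    (⨅ u, g1 u) ≤ (⨅ u, g2 u) + r := by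
  rw [← sub_le_iff_le_add]
  refine le_ciInf fun u => ?_
  have : (⨅ u, g1 u) ≤ g1 u := ciInf_le h1 u
  have := h u
  linarith

lemma abs_ciInf_sub_le {ι : Type*} [Nonempty ι] {g1 g2 : ι → ℝ}
    (h1 : BddBelow (Set.range g1)) (h2 : BddBelow (Set.range g2))
    {r : ℝ} (h : ∀ u, |g1 u - g2 u| ≤ r) :
    |(⨅ u, g1 u) - ⨅ u, g2 u| ≤ r := by
  rw [abs_sub_le_iff]
  constructor
  · have := ciInf_le_add h1 (fun u => (abs_sub_le_iff.mp (h u)).1)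
    linarith
  · have := ciInf_le_add h2 (fun u => (abs_sub_le_iff.mp (h u)).2)
    linarith

/-- The risk-aware Bellman operator:
`(T v)(s) = inf_{u ∈ U_s} sup_{μ ∈ M(s,u)} ( ∑_{(a,k)} μ(a,k)·(c(s,a) + γ·v(k)) − b_s(μ) )`. -/
def riskBellman {A S : Type*} [Fintype A] [Fintype S]
    (γ : ℝ) (c : S × A → ℝ) {U : S → Type*}
    (M : (s : S) → U s → Set ((A × S) → ℝ))
    (b : S → ((A × S) → ℝ) → ℝ) (v : S → ℝ) (s : S) : ℝ :=
  ⨅ u : U s,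
    sSup ((fun μ : (A × S) → ℝ =>
      (∑ q : A × S, μ q * (c (s, q.1) + γ * v q.2)) - b s μ) '' M s u)

/-- The risk-aware Bellman operator has a unique fixed point. -/
theorem riskBellman_exists_unique_fixed_point {A S : Type*} [Fintype A] [Nonempty A]
    [Fintype S] [Nonempty S]
    (γ : ℝ) (hγ : γ ∈ Set.Ioo (0 : ℝ) 1) (c : S × A → ℝ)
    {U : S → Type*} [∀ s, Nonempty (U s)]
    (M : (s : S) → U s → Set ((A × S) → ℝ))
    (hMne : ∀ s u, (M s u).Nonempty) (hMc : ∀ s u, IsCompact (M s u))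
    (hMs : ∀ s u, M s u ⊆ stdSimplex ℝ (A × S))
    (b : S → ((A × S) → ℝ) → ℝ) (hb : ∀ s, Continuous (b s)) :
    ∃! v : S → ℝ, ∀ s : S, v s = riskBellman γ c M b v s := by
  classical
  set f : (S → ℝ) → S → ((A × S) → ℝ) → ℝ := fun v s μ =>
    (∑ q : A × S, μ q * (c (s, q.1) + γ * v q.2)) - b s μ with hf
  have hfc : ∀ v s, Continuous (f v s) := by
    intro v s
    exact (continuous_finset_sum _ fun q _ =>
      (continuous_apply q).mul continuous_const).sub (hb s)
  -- bounds on b over the standard simplex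
  have hbbound : ∀ s, ∃ Cb : ℝ, ∀ μ ∈ stdSimplex ℝ (A × S), |b s μ| ≤ Cb := by
    intro s
    obtain ⟨Cb, hCb⟩ := (isCompact_stdSimplex ℝ (A × S)).exists_bound_of_continuousOn
      ((hb s).continuousOn)
    exact ⟨Cb, fun μ hμ => by simpa [Real.norm_eq_abs] using hCb μ hμ⟩
  -- bddAbove of images
  have hbdd : ∀ v s u, BddAbove ((f v s) '' M s u) := fun v s u =>
    ((hMc s u).image (hfc v s)).bddAbove
  -- uniform lower bound on f v s over the simplex
  have hflb : ∀ v s, ∃ L : ℝ, ∀ μ ∈ stdSimplex ℝ (A × S), L ≤ f v s μ := by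
    intro v s
    obtain ⟨Cb, hCb⟩ := hbbound s
    set Ca : ℝ := ∑ q : A × S, |c (s, q.1) + γ * v q.2| with hCa
    refine ⟨-Ca - Cb, fun μ hμ => ?_⟩
    have h1 : |∑ q : A × S, μ q * (c (s, q.1) + γ * v q.2)| ≤ Ca := by
      refine simplex_sum_abs_le hμ fun q => ?_
      exact Finset.single_le_sum (f := fun q : A × S => |c (s, q.1) + γ * v q.2|)
        (fun q _ => abs_nonneg _) (Finset.mem_univ q)
    have h2 := hCb μ hμ
    have := abs_le.mp h1
    have := abs_le.mp h2
    simp only [hf]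
    linarith [(abs_le.mp h1).1, (abs_le.mp h2).2]
  -- bddBelow of the families over u
  have hbddb : ∀ v s, BddBelow (Set.range fun u : U s => sSup ((f v s) '' M s u)) := by
    intro v s
    obtain ⟨L, hL⟩ := hflb v s
    refine ⟨L, ?_⟩
    rintro y ⟨u, rfl⟩
    obtain ⟨μ, hμ⟩ := hMne s u
    exact le_trans (hL μ (hMs s u hμ)) (le_csSup (hbdd v s u) ⟨μ, hμ, rfl⟩)
  set T : (S → ℝ) → (S → ℝ) := fun v => riskBellman γ c M b v with hT
  have hTdef : ∀ v s, T v s = ⨅ u : U s, sSup ((f v s) '' M s u) := fun v s => rfl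
  -- contraction estimate
  have hcontr : ∀ v w : S → ℝ, dist (T v) (T w) ≤ γ * dist v w := by
    intro v w
    rw [dist_pi_le_iff (mul_nonneg hγ.1.le dist_nonneg)]
    intro s
    rw [Real.dist_eq, hTdef, hTdef]
    refine abs_ciInf_sub_le (hbddb v s) (hbddb w s) fun u => ?_
    refine abs_sSup_image_sub_le (hMne s u) (hbdd v s u) (hbdd w s u) fun μ hμ => ?_
    have hμs := hMs s u hμ
    have : f v s μ - f w s μ = ∑ q : A × S, μ q * (γ * (v q.2 - w q.2)) := by
      simp only [hf]
      rw [sub_sub_sub_cancel_right, ← Finset.sum_sub_distrib]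
      exact Finset.sum_congr rfl fun q _ => by ring
    rw [this]
    refine simplex_sum_abs_le hμs fun q => ?_
    rw [abs_mul, abs_of_nonneg hγ.1.le]
    exact mul_le_mul_of_nonneg_left
      (by simpa [Real.dist_eq] using dist_le_pi_dist v w q.2) hγ.1.le
  have hlip : LipschitzWith γ.toNNReal T := by
    refine LipschitzWith.of_dist_le_mul fun v w => ?_
    rw [Real.coe_toNNReal γ hγ.1.le]
    exact hcontr v w
  have hcw : ContractingWith γ.toNNReal T := by
    constructor
    · rw [← NNReal.coe_lt_coe, Real.coe_toNNReal γ hγ.1.le, NNReal.coe_one]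
      exact hγ.2
    · exact hlip
  have hfix := hcw.fixedPoint_isFixedPt (f := T)
  refine ⟨hcw.fixedPoint T, fun s => ?_, fun v hv => ?_⟩
  · have : T (hcw.fixedPoint T) = hcw.fixedPoint T := hfix
    exact (congrFun this s).symm
  · refine hcw.fixedPoint_unique ?_
    exact funext fun s => (hv s).symm
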